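/- Let k ≥ 2 be an integer, let f : ℍ → ℂ be holomorphic, let γ ∈ SL(2, ℝ) satisfy f|_k γ = f, and fix τ₀ ∈ ℍ. Then for every τ ∈ ℍ, (f̃_{τ₀} |_{2−k} γ)(τ) − f̃_{τ₀}(τ) = ((2πi)^{k−1}/(k−2)!) · ∫_{γ^{−1}τ₀}^{τ₀} (τ − z)^{k−2} f(z) dz (the integral along any path in ℍ); in particular, the function τ ↦ (f̃_{τ₀} |_{2−k} γ)(τ) − f̃_{τ₀}(τ) is a polynomial in τ of degree at most k−2. -/

import Mathlib

open Complex

/-- The weight-`w` slash action of the real matrix `(a b; c d)` on functions `ℂ → ℂ`. -/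
noncomputable def slash (w : ℤ) (a b c d : ℝ) (F : ℂ → ℂ) : ℂ → ℂ :=
  fun τ => ((c : ℂ) * τ + (d : ℂ)) ^ (-w) * F (((a : ℂ) * τ + (b : ℂ)) / ((c : ℂ) * τ + (d : ℂ)))

/-- The integral of `g` along the straight segment from `z₀` to `z₁`
(the path integral `∫_{z₀}^{z₁} g(z) dz`; for holomorphic integrands on the simply connected
upper half-plane this agrees with the integral along any path in the upper half-plane). -/
noncomputable def segInt (g : ℂ → ℂ) (z₀ z₁ : ℂ) : ℂ :=
  ∫ t in (0:ℝ)..1, g (z₀ + (t : ℂ) * (z₁ - z₀)) * (z₁ - z₀)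

/-- The Eichler integral `f̃_{τ₀}(τ) = ((2πi)^{k−1}/(k−2)!) ∫_{τ₀}^{τ} (τ−z)^{k−2} f(z) dz`. -/
noncomputable def eichler (k : ℕ) (f : ℂ → ℂ) (τ₀ τ : ℂ) : ℂ :=
  (2 * (Real.pi : ℂ) * Complex.I) ^ (k - 1) / (Nat.factorial (k - 2) : ℂ) *
    segInt (fun z => (τ - z) ^ (k - 2) * f z) τ₀ τ

namespace PPaux

def U : Set ℂ := {τ : ℂ | 0 < τ.im}

lemma mem_U {z : ℂ} : z ∈ U ↔ 0 < z.im := Iff.rfl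

lemma seg_mem_U {z₀ z₁ : ℂ} (h₀ : z₀ ∈ U) (h₁ : z₁ ∈ U) {t : ℝ} (ht0 : 0 ≤ t) (ht1 : t ≤ 1) :
    z₀ + (t : ℂ) * (z₁ - z₀) ∈ U := by
  have : (z₀ + (t : ℂ) * (z₁ - z₀)).im = (1 - t) * z₀.im + t * z₁.im := by
    simp [Complex.add_im, Complex.mul_im, Complex.sub_im]; ring
  simp only [mem_U, this]
  have h0 := mem_U.mp h₀; have h1 := mem_U.mp h₁
  rcases ht0.eq_or_lt with rfl | ht
  · simpa using h0
  · nlinarith [mul_nonneg (sub_nonneg.2 ht1) h0.le, mul_pos ht h1]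

lemma closedBall_subset_U {z : ℂ} (hz : z ∈ U) : Metric.closedBall z (z.im / 2) ⊆ U := by
  intro x hx
  have h1 : |(x - z).im| ≤ ‖x - z‖ := Complex.abs_im_le_norm _
  have h2 : ‖x - z‖ ≤ z.im / 2 := by
    simpa [Metric.mem_closedBall, Complex.dist_eq] using hx
  have := mem_U.mp hz
  have : (x - z).im = x.im - z.im := Complex.sub_im _ _
  simp only [mem_U]
  cases' abs_le.mp (h1.trans h2) with hl hr
  simp_all
  linarith

open intervalIntegral MeasureTheory in
lemma hasDerivAt_segInt (g : ℂ → ℂ) (hg : DifferentiableOn ℂ g U) {z₀ : ℂ} (hz₀ : z₀ ∈ U)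
    {z : ℂ} (hz : z ∈ U) : HasDerivAt (segInt g z₀) (g z) z := by
  have hUopen : IsOpen U := isOpen_lt continuous_const Complex.continuous_im
  have hgc : ContinuousOn g U := hg.continuousOn
  have hg' : ContinuousOn (deriv g) U :=
    ((hg.analyticOnNhd hUopen).deriv).continuousOn
  have hgd : ∀ w ∈ U, HasDerivAt g (deriv g w) w := fun w hw =>
    (hg.differentiableAt (hUopen.mem_nhds hw)).hasDerivAt
  set ε : ℝ := z.im / 2 with hε
  have hεpos : 0 < ε := by have := mem_U.mp hz; positivity
  have hball : Metric.closedBall z ε ⊆ U := closedBall_subset_U hz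
  -- the compact set containing all relevant segment points
  set K : Set ℂ := (fun p : ℝ × ℂ => z₀ + (p.1 : ℂ) * (p.2 - z₀)) ''
      (Set.Icc (0:ℝ) 1 ×ˢ Metric.closedBall z ε) with hK
  have hKcomp : IsCompact K :=
    (isCompact_Icc.prod (isCompact_closedBall _ _)).image (by fun_prop)
  have hKU : K ⊆ U := by
    rintro w ⟨⟨t, x⟩, ⟨⟨ht0, ht1⟩, hx⟩, rfl⟩
    exact seg_mem_U hz₀ (hball hx) ht0 ht1
  obtain ⟨M1, hM1⟩ := hKcomp.exists_bound_of_continuousOn (hgc.mono hKU)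
  obtain ⟨M2, hM2⟩ := hKcomp.exists_bound_of_continuousOn (hg'.mono hKU)
  set R : ℝ := ‖z - z₀‖ + ε with hR
  have hxR : ∀ x ∈ Metric.ball z ε, ‖x - z₀‖ ≤ R := by
    intro x hx
    have : ‖x - z₀‖ ≤ ‖x - z‖ + ‖z - z₀‖ := norm_sub_le_norm_sub_add_norm_sub _ _ _
    have hx' : ‖x - z‖ ≤ ε := by
      simpa [Complex.dist_eq] using (Metric.mem_ball.mp hx).le
    simp only [hR]; linarith
  have hmemK : ∀ (t : ℝ), t ∈ Set.Icc (0:ℝ) 1 → ∀ x ∈ Metric.closedBall z ε,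
      z₀ + (t : ℂ) * (x - z₀) ∈ K := by
    intro t ht x hx
    exact ⟨⟨t, x⟩, ⟨ht, hx⟩, rfl⟩
  -- continuity of the path for fixed x in the ball
  have hcont : ∀ x ∈ Metric.closedBall z ε,
      ContinuousOn (fun t : ℝ => g (z₀ + (t : ℂ) * (x - z₀)) * (x - z₀)) (Set.Icc 0 1) := by
    intro x hx
    apply ContinuousOn.mul _ continuousOn_const
    apply hgc.comp (by fun_prop)
    intro t ht
    exact hKU (hmemK t ht x hx)
  have hcont' : ∀ x ∈ Metric.closedBall z ε,
      ContinuousOn (fun t : ℝ => deriv g (z₀ + (t : ℂ) * (x - z₀)) * (t : ℂ) * (x - z₀)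
        + g (z₀ + (t : ℂ) * (x - z₀))) (Set.Icc 0 1) := by
    intro x hx
    have hmaps : Set.MapsTo (fun t : ℝ => z₀ + (t : ℂ) * (x - z₀)) (Set.Icc 0 1) U :=
      fun t ht => hKU (hmemK t ht x hx)
    exact (((hg'.comp (by fun_prop) hmaps).mul (by fun_prop)).mul continuousOn_const).add
      (hgc.comp (by fun_prop) hmaps)
  have key := hasDerivAt_integral_of_dominated_loc_of_deriv_le (𝕜 := ℂ)
      (F := fun x t => g (z₀ + (t : ℂ) * (x - z₀)) * (x - z₀))
      (F' := fun x t => deriv g (z₀ + (t : ℂ) * (x - z₀)) * (t : ℂ) * (x - z₀)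
        + g (z₀ + (t : ℂ) * (x - z₀)))
      (x₀ := z) (a := 0) (b := 1) (μ := MeasureTheory.volume) (bound := fun _ => M2 * R + M1) (Metric.ball_mem_nhds z hεpos)
      ?_ ?_ ?_ ?_ ?_ ?_
  · have heq : (∫ t in (0:ℝ)..1, (deriv g (z₀ + (t : ℂ) * (z - z₀)) * (t : ℂ) * (z - z₀)
        + g (z₀ + (t : ℂ) * (z - z₀)))) = g z := by
      have hFTC : ∀ t ∈ Set.uIcc (0:ℝ) 1,
          HasDerivAt (fun s : ℝ => (s : ℂ) * g (z₀ + (s : ℂ) * (z - z₀)))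
            (deriv g (z₀ + (t : ℂ) * (z - z₀)) * (t : ℂ) * (z - z₀)
              + g (z₀ + (t : ℂ) * (z - z₀))) t := by
        intro t ht
        rw [Set.uIcc_of_le zero_le_one] at ht
        have hw : z₀ + (t : ℂ) * (z - z₀) ∈ U := seg_mem_U hz₀ hz ht.1 ht.2
        have hψ : HasDerivAt (fun s : ℂ => s * g (z₀ + s * (z - z₀)))
            ((t : ℂ) * (deriv g (z₀ + (t : ℂ) * (z - z₀)) * (z - z₀))
              + g (z₀ + (t : ℂ) * (z - z₀))) (t : ℂ) := by
          have h1 : HasDerivAt (fun s : ℂ => z₀ + s * (z - z₀)) (z - z₀) (t : ℂ) := by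
            simpa using ((hasDerivAt_id ((t : ℂ))).mul_const (z - z₀)).const_add z₀
          have h2 := ((hgd _ hw).comp (t : ℂ) h1)
          have h3 := (hasDerivAt_id ((t : ℂ))).mul h2
          refine h3.congr_deriv ?_
          simp only [Function.comp, id_eq]
          ring
        have := hψ.comp_ofReal
        convert this using 1
        ring
      rw [integral_eq_sub_of_hasDerivAt hFTC (ContinuousOn.intervalIntegrable (by
        rw [Set.uIcc_of_le zero_le_one]
        exact hcont' z (Metric.mem_closedBall_self hεpos.le)))]
      simp
    rw [heq] at key
    exact key.2
  · filter_upwards [Metric.ball_mem_nhds z hεpos] with x hx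
    apply ContinuousOn.aestronglyMeasurable _ measurableSet_uIoc
    exact (hcont x (Metric.ball_subset_closedBall hx)).mono (by
      rw [Set.uIoc_of_le zero_le_one]; exact Set.Ioc_subset_Icc_self)
  · exact ContinuousOn.intervalIntegrable (by
      rw [Set.uIcc_of_le zero_le_one]
      exact hcont z (Metric.mem_closedBall_self hεpos.le))
  · apply ContinuousOn.aestronglyMeasurable _ measurableSet_uIoc
    exact (hcont' z (Metric.mem_closedBall_self hεpos.le)).mono (by
      rw [Set.uIoc_of_le zero_le_one]; exact Set.Ioc_subset_Icc_self)
  · filter_upwards with t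
    intro ht x hx
    rw [Set.uIoc_of_le zero_le_one] at ht
    have ht' : t ∈ Set.Icc (0:ℝ) 1 := ⟨ht.1.le, ht.2⟩
    have hmem := hmemK t ht' x (Metric.ball_subset_closedBall hx)
    have hb1 := hM1 _ hmem
    have hb2 := hM2 _ hmem
    have htabs : |t| ≤ 1 := by rw [abs_of_pos ht.1]; exact ht.2
    calc ‖deriv g (z₀ + (t : ℂ) * (x - z₀)) * (t : ℂ) * (x - z₀)
          + g (z₀ + (t : ℂ) * (x - z₀))‖
        ≤ ‖deriv g (z₀ + (t : ℂ) * (x - z₀)) * (t : ℂ) * (x - z₀)‖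
          + ‖g (z₀ + (t : ℂ) * (x - z₀))‖ := norm_add_le _ _
      _ ≤ M2 * R + M1 := by
          have : ‖deriv g (z₀ + (t : ℂ) * (x - z₀)) * (t : ℂ) * (x - z₀)‖
              = ‖deriv g (z₀ + (t : ℂ) * (x - z₀))‖ * |t| * ‖x - z₀‖ := by
            simp [norm_mul, Complex.norm_real]
          rw [this]
          have h0 : (0:ℝ) ≤ ‖deriv g (z₀ + (t : ℂ) * (x - z₀))‖ := norm_nonneg _
          have hRnn : (0:ℝ) ≤ ‖x - z₀‖ := norm_nonneg _
          have hxR' := hxR x hx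
          have hM2nn : (0:ℝ) ≤ M2 := le_trans h0 hb2
          have h4 : ‖deriv g (z₀ + (t : ℂ) * (x - z₀))‖ * |t| ≤ M2 := by
            nlinarith [abs_nonneg t]
          have h5 : ‖deriv g (z₀ + (t : ℂ) * (x - z₀))‖ * |t| * ‖x - z₀‖ ≤ M2 * R := by
            apply mul_le_mul h4 hxR' hRnn hM2nn
          linarith
  · exact intervalIntegrable_const
  · filter_upwards with t
    intro ht x hx
    rw [Set.uIoc_of_le zero_le_one] at ht
    have hw : z₀ + (t : ℂ) * (x - z₀) ∈ U :=
      hKU (hmemK t ⟨ht.1.le, ht.2⟩ x (Metric.ball_subset_closedBall hx))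
    have h1 : HasDerivAt (fun y : ℂ => z₀ + (t : ℂ) * (y - z₀)) (t : ℂ) x := by
      simpa using (((hasDerivAt_id x).sub_const z₀).const_mul (t : ℂ)).const_add z₀
    have h2 := (hgd _ hw).comp x h1
    have h3 := h2.mul (((hasDerivAt_id x).sub_const z₀))
    refine h3.congr_deriv ?_
    simp
    try ring

lemma segInt_eq_sub {g P : ℂ → ℂ} (hgc : ContinuousOn g U)
    (hP : ∀ w ∈ U, HasDerivAt P (g w) w) {z₀ z₁ : ℂ} (h₀ : z₀ ∈ U) (h₁ : z₁ ∈ U) :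
    segInt g z₀ z₁ = P z₁ - P z₀ := by
  have hFTC : ∀ t ∈ Set.uIcc (0:ℝ) 1,
      HasDerivAt (fun s : ℝ => P (z₀ + (s:ℂ) * (z₁ - z₀)))
        (g (z₀ + (t:ℂ) * (z₁ - z₀)) * (z₁ - z₀)) t := by
    intro t ht
    rw [Set.uIcc_of_le zero_le_one] at ht
    have hw := seg_mem_U h₀ h₁ ht.1 ht.2
    have h1 : HasDerivAt (fun s : ℂ => z₀ + s * (z₁ - z₀)) (z₁ - z₀) (t:ℂ) := by
      simpa using ((hasDerivAt_id ((t:ℂ))).mul_const (z₁ - z₀)).const_add z₀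
    have h2 := (hP _ hw).comp (t:ℂ) h1
    exact h2.comp_ofReal
  have hint : IntervalIntegrable (fun t : ℝ => g (z₀ + (t:ℂ) * (z₁ - z₀)) * (z₁ - z₀))
      MeasureTheory.volume 0 1 := by
    apply ContinuousOn.intervalIntegrable
    rw [Set.uIcc_of_le zero_le_one]
    apply ContinuousOn.mul _ continuousOn_const
    apply hgc.comp (by fun_prop)
    intro t ht; exact seg_mem_U h₀ h₁ ht.1 ht.2
  have := intervalIntegral.integral_eq_sub_of_hasDerivAt hFTC hint
  simpa [segInt] using this

section Moebius
variable {a b c d : ℝ}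

lemma cd_ne_zero (hdet : a * d - b * c = 1) {w : ℂ} (hw : w ∈ U) : (c:ℂ) * w + d ≠ 0 := by
  intro h
  have him : (0:ℝ) < w.im := hw
  have h1 : c * w.im = 0 := by
    have := congrArg Complex.im h
    simpa [Complex.add_im, Complex.mul_im] using this
  have hc : c = 0 := by
    rcases mul_eq_zero.mp h1 with h' | h'
    · exact h'
    · exact absurd h' (ne_of_gt him)
  subst hc
  have hd : d = 0 := by
    have := congrArg Complex.re h
    simpa [Complex.add_re, Complex.mul_re] using this
  subst hd
  norm_num at hdet

lemma moebius_mem_U (hdet : a * d - b * c = 1) {w : ℂ} (hw : w ∈ U) :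
    ((a:ℂ) * w + b) / ((c:ℂ) * w + d) ∈ U := by
  have hcd := cd_ne_zero hdet hw
  have hns : 0 < Complex.normSq ((c:ℂ) * w + d) := Complex.normSq_pos.mpr hcd
  have key : (((a:ℂ) * w + b) / ((c:ℂ) * w + d)).im * Complex.normSq ((c:ℂ) * w + d)
      = w.im := by
    rw [Complex.div_im]
    rw [← sub_div, div_mul_cancel₀ _ hns.ne']
    simp only [Complex.add_im, Complex.mul_im, Complex.add_re, Complex.mul_re, Complex.ofReal_re,
      Complex.ofReal_im]
    linear_combination w.im * hdet
  have hpos : (0:ℝ) < w.im := hw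
  have : 0 < (((a:ℂ) * w + b) / ((c:ℂ) * w + d)).im * Complex.normSq ((c:ℂ) * w + d) := by
    rw [key]; exact hpos
  rcases mul_pos_iff.mp this with ⟨h, _⟩ | ⟨_, h⟩
  · exact h
  · exact absurd hns (not_lt.mpr h.le)

lemma hasDerivAt_moebius (hdet : a * d - b * c = 1) {w : ℂ} (hw : w ∈ U) :
    HasDerivAt (fun w : ℂ => ((a:ℂ) * w + b) / ((c:ℂ) * w + d))
      (1 / ((c:ℂ) * w + d) ^ 2) w := by
  have hcd := cd_ne_zero hdet hw
  have hdet' : (a:ℂ) * d - b * c = 1 := by exact_mod_cast hdet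
  have hu : HasDerivAt (fun w : ℂ => (a:ℂ) * w + b) (a:ℂ) w := by
    simpa using ((hasDerivAt_id w).const_mul (a:ℂ)).add_const (b:ℂ)
  have hv : HasDerivAt (fun w : ℂ => (c:ℂ) * w + d) (c:ℂ) w := by
    simpa using ((hasDerivAt_id w).const_mul (c:ℂ)).add_const (d:ℂ)
  have h := hu.div hv hcd
  refine h.congr_deriv ?_
  symm
  rw [one_div, eq_div_iff (pow_ne_zero 2 hcd), inv_mul_cancel₀ (pow_ne_zero 2 hcd)]
  linear_combination -hdet'

end Moebius

noncomputable def moeb (a b c d : ℝ) (w : ℂ) : ℂ := ((a:ℂ) * w + b) / ((c:ℂ) * w + d)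

lemma moeb_mem_U {a b c d : ℝ} (hdet : a * d - b * c = 1) {w : ℂ} (hw : w ∈ U) :
    moeb a b c d w ∈ U := moebius_mem_U hdet hw

lemma hasDerivAt_moeb {a b c d : ℝ} (hdet : a * d - b * c = 1) {w : ℂ} (hw : w ∈ U) :
    HasDerivAt (moeb a b c d) (1 / ((c:ℂ) * w + d) ^ 2) w := hasDerivAt_moebius hdet hw

lemma moeb_inv {a b c d : ℝ} (hdet : a * d - b * c = 1) {w : ℂ} (hw : w ∈ U) :
    moeb a b c d (moeb d (-b) (-c) a w) = w := by
  have hdetC : (a:ℂ) * d - b * c = 1 := by exact_mod_cast hdet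
  have hdet2 : d * a - (-b) * (-c) = 1 := by linear_combination hdet
  have hca : ((-c : ℝ):ℂ) * w + ((a : ℝ):ℂ) ≠ 0 := cd_ne_zero hdet2 hw
  push_cast at hca
  have hZ : (c:ℂ) * ((d:ℂ) * w + -(b:ℂ)) + (d:ℂ) * (-(c:ℂ) * w + (a:ℂ)) ≠ 0 := by
    have h1 : (c:ℂ) * ((d:ℂ) * w + -(b:ℂ)) + (d:ℂ) * (-(c:ℂ) * w + (a:ℂ)) = 1 := by
      linear_combination hdetC
    rw [h1]; exact one_ne_zero
  have hnum : (a:ℂ) * ((d:ℂ) * w + -(b:ℂ)) + (b:ℂ) * (-(c:ℂ) * w + (a:ℂ)) = w := by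
    linear_combination w * hdetC
  have hden : (c:ℂ) * ((d:ℂ) * w + -(b:ℂ)) + (d:ℂ) * (-(c:ℂ) * w + (a:ℂ)) = 1 := by
    linear_combination hdetC
  simp only [moeb]
  push_cast
  rw [mul_div_assoc', mul_div_assoc', div_add' _ _ _ hca, div_add' _ _ _ hca,
    div_div_div_cancel_right₀ hca, hnum, hden, div_one]

end PPaux

open PPaux

/-- If `f` is holomorphic on the upper half-plane, invariant of weight `k` under
`γ = (a b; c d) ∈ SL(2, ℝ)`, and `τ₀` is in the upper half-plane, then for all `τ` in the upper
half-plane `(f̃_{τ₀}|_{2−k}γ)(τ) − f̃_{τ₀}(τ) = ((2πi)^{k−1}/(k−2)!)·∫_{γ⁻¹τ₀}^{τ₀}(τ−z)^{k−2}f(z)dz`;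
in particular this difference is a polynomial in `τ` of degree at most `k−2`. -/
theorem period_polynomial_formula (k : ℕ) (hk : 2 ≤ k)
    (f : ℂ → ℂ) (hf : DifferentiableOn ℂ f {τ : ℂ | 0 < τ.im})
    (a b c d : ℝ) (hdet : a * d - b * c = 1)
    (hinv : ∀ τ : ℂ, 0 < τ.im → slash (k : ℤ) a b c d f τ = f τ)
    (τ₀ : ℂ) (hτ₀ : 0 < τ₀.im) :
    (∀ τ : ℂ, 0 < τ.im →
      slash (2 - (k : ℤ)) a b c d (eichler k f τ₀) τ - eichler k f τ₀ τ
        = (2 * (Real.pi : ℂ) * Complex.I) ^ (k - 1) / (Nat.factorial (k - 2) : ℂ) *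
            segInt (fun z => (τ - z) ^ (k - 2) * f z)
              (((d : ℂ) * τ₀ - (b : ℂ)) / (-(c : ℂ) * τ₀ + (a : ℂ))) τ₀) ∧
    ∃ p : Polynomial ℂ, p.natDegree ≤ k - 2 ∧
      ∀ τ : ℂ, 0 < τ.im →
        slash (2 - (k : ℤ)) a b c d (eichler k f τ₀) τ - eichler k f τ₀ τ = p.eval τ := by
  have hτ₀U : τ₀ ∈ U := hτ₀
  set Cc : ℂ := (2 * (Real.pi : ℂ) * Complex.I) ^ (k - 1) / (Nat.factorial (k - 2) : ℂ)
    with hCc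
  have hdetC : (a:ℂ) * d - b * c = 1 := by exact_mod_cast hdet
  have hdet2 : d * a - (-b) * (-c) = 1 := by linear_combination hdet
  have hq : ((d : ℂ) * τ₀ - (b : ℂ)) / (-(c : ℂ) * τ₀ + (a : ℂ)) = moeb d (-b) (-c) a τ₀ := by
    simp only [moeb, Complex.ofReal_neg]
    ring_nf
  set q : ℂ := moeb d (-b) (-c) a τ₀ with hqdef
  have hqU : q ∈ U := moeb_mem_U hdet2 hτ₀U
  have hcdq : (c:ℂ) * q + d ≠ 0 := cd_ne_zero hdet hqU
  have hca : (-c : ℝ) * τ₀ + (a : ℝ) ≠ (0 : ℂ) := cd_ne_zero hdet2 hτ₀U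
  have hJq : moeb a b c d q = τ₀ := moeb_inv hdet hτ₀U
  have hfc : ContinuousOn f U := hf.continuousOn
  have main : ∀ τ : ℂ, 0 < τ.im →
      slash (2 - (k:ℤ)) a b c d (eichler k f τ₀) τ - eichler k f τ₀ τ
        = Cc * segInt (fun z => (τ - z) ^ (k - 2) * f z) q τ₀ := by
    intro τ hτim
    have hτU : τ ∈ U := hτim
    have hcdτ : (c:ℂ) * τ + d ≠ 0 := cd_ne_zero hdet hτU
    have hJτU : moeb a b c d τ ∈ U := moeb_mem_U hdet hτU
    have hgc : ∀ σ : ℂ, ContinuousOn (fun z => (σ - z) ^ (k - 2) * f z) U :=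
      fun σ => (((continuous_const.sub continuous_id).pow (k-2)).continuousOn).mul hfc
    have hgγd : DifferentiableOn ℂ (fun z => (moeb a b c d τ - z) ^ (k - 2) * f z) U :=
      (((differentiable_const _).sub differentiable_id).pow (k-2)).differentiableOn.mul hf
    have hG : ∀ w ∈ U, HasDerivAt (segInt (fun z => (moeb a b c d τ - z) ^ (k - 2) * f z) τ₀)
        ((moeb a b c d τ - w) ^ (k - 2) * f w) w := fun w hw =>
      hasDerivAt_segInt _ hgγd hτ₀U hw
    set H : ℂ → ℂ := fun w => ((c:ℂ) * τ + d) ^ (k - 2) *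
      segInt (fun z => (moeb a b c d τ - z) ^ (k - 2) * f z) τ₀ (moeb a b c d w) with hH
    have hHderiv : ∀ w ∈ U, HasDerivAt H ((τ - w) ^ (k - 2) * f w) w := by
      intro w hw
      have hcdw : (c:ℂ) * w + d ≠ 0 := cd_ne_zero hdet hw
      have hJw : moeb a b c d w ∈ U := moeb_mem_U hdet hw
      have h1 := hasDerivAt_moeb hdet hw
      have h2 := ((hG _ hJw).comp w h1).const_mul (((c:ℂ) * τ + d) ^ (k - 2))
      refine h2.congr_deriv ?_
      symm
      try simp only [Function.comp]
      have hfw : f (moeb a b c d w) = ((c:ℂ) * w + d) ^ k * f w := by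
        have h := hinv w hw
        simp only [slash] at h
        rw [show (((a:ℂ) * w + b) / ((c:ℂ) * w + d)) = moeb a b c d w from rfl] at h
        rw [zpow_neg, zpow_natCast] at h
        have hXk : ((c:ℂ) * w + d) ^ k ≠ 0 := pow_ne_zero _ hcdw
        field_simp at h
        linear_combination h
      have hkey : (moeb a b c d τ - moeb a b c d w) * (((c:ℂ) * τ + d) * ((c:ℂ) * w + d))
          = τ - w := by
        simp only [moeb]
        rw [div_sub_div _ _ hcdτ hcdw, div_mul_cancel₀ _ (mul_ne_zero hcdτ hcdw)]
        linear_combination (τ - w) * hdetC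
      have hpow : (moeb a b c d τ - moeb a b c d w) ^ (k - 2)
            * (((c:ℂ) * τ + d) ^ (k - 2) * ((c:ℂ) * w + d) ^ (k - 2))
          = (τ - w) ^ (k - 2) := by
        rw [← mul_pow, ← mul_pow, hkey]
      have hk2 : k = (k - 2) + 2 := by omega
      rw [hfw]
      rw [← pow_sub_mul_pow ((c:ℂ) * w + d) hk]
      have h2ne : ((c:ℂ) * w + d) ^ 2 ≠ 0 := pow_ne_zero _ hcdw
      linear_combination (-f w) * hpow + (-(((c:ℂ) * τ + d) ^ (k - 2) * (moeb a b c d τ -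
        moeb a b c d w) ^ (k - 2) * ((c:ℂ) * w + d) ^ (k - 2) * f w)) * (mul_one_div_cancel h2ne)
    have hGτ₀ : segInt (fun z => (moeb a b c d τ - z) ^ (k - 2) * f z) τ₀ τ₀ = 0 := by
      simp [segInt]
    have e1 : segInt (fun z => (τ - z) ^ (k - 2) * f z) τ₀ τ = H τ - H τ₀ :=
      segInt_eq_sub (hgc τ) hHderiv hτ₀U hτU
    have e2 : segInt (fun z => (τ - z) ^ (k - 2) * f z) q τ₀ = H τ₀ - H q :=
      segInt_eq_sub (hgc τ) hHderiv hqU hτ₀U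
    have hslash : slash (2 - (k:ℤ)) a b c d (eichler k f τ₀) τ = Cc * H τ := by
      simp only [slash, eichler, hH]
      rw [show (((a:ℂ) * τ + b) / ((c:ℂ) * τ + d)) = moeb a b c d τ from rfl]
      rw [show -(2 - (k:ℤ)) = ((k - 2 : ℕ) : ℤ) by push_cast; omega, zpow_natCast]
      ring
    have hHq : H q = 0 := by
      rw [hH]
      simp only [hJq, hGτ₀, mul_zero]
    have heich : eichler k f τ₀ τ = Cc * segInt (fun z => (τ - z) ^ (k - 2) * f z) τ₀ τ := rfl
    rw [hslash, heich, e1, e2, hHq]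
    ring
  constructor
  · intro τ hτ
    rw [main τ hτ, ← hq]
  · refine ⟨∑ j ∈ Finset.range (k - 2 + 1), Polynomial.C (Cc * ((k - 2).choose j : ℂ) *
      segInt (fun z => (-z) ^ (k - 2 - j) * f z) q τ₀) * Polynomial.X ^ j, ?_, ?_⟩
    · apply Polynomial.natDegree_sum_le_of_forall_le
      intro j hj
      exact le_trans (Polynomial.natDegree_C_mul_X_pow_le _ _)
        (by have := Finset.mem_range.mp hj; omega)
    · intro τ hτ
      rw [main τ hτ]
      have hmaps : Set.MapsTo (fun t : ℝ => q + (t:ℂ) * (τ₀ - q)) (Set.Icc 0 1) U :=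
        fun t ht => seg_mem_U hqU hτ₀U ht.1 ht.2
      have hint : ∀ j : ℕ, IntervalIntegrable (fun t : ℝ =>
          ((k - 2).choose j : ℂ) * τ ^ j * ((-(q + (t:ℂ) * (τ₀ - q))) ^ (k - 2 - j)
            * f (q + (t:ℂ) * (τ₀ - q)) * (τ₀ - q))) MeasureTheory.volume 0 1 := by
        intro j
        apply ContinuousOn.intervalIntegrable
        rw [Set.uIcc_of_le zero_le_one]
        exact continuousOn_const.mul
          ((((by fun_prop : Continuous (fun t : ℝ => -(q + (t:ℂ) * (τ₀ - q)))).pow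
            (k - 2 - j)).continuousOn.mul
              (hfc.comp (by fun_prop) hmaps)).mul continuousOn_const)
      have hexp : segInt (fun z => (τ - z) ^ (k - 2) * f z) q τ₀
          = ∑ j ∈ Finset.range (k - 2 + 1), ((k - 2).choose j : ℂ) * τ ^ j *
              segInt (fun z => (-z) ^ (k - 2 - j) * f z) q τ₀ := by
        calc segInt (fun z => (τ - z) ^ (k - 2) * f z) q τ₀
            = ∫ t in (0:ℝ)..1, ∑ j ∈ Finset.range (k - 2 + 1),
                ((k - 2).choose j : ℂ) * τ ^ j * ((-(q + (t:ℂ) * (τ₀ - q))) ^ (k - 2 - j)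
                  * f (q + (t:ℂ) * (τ₀ - q)) * (τ₀ - q)) := by
              rw [segInt]
              apply intervalIntegral.integral_congr
              intro t ht
              simp only
              rw [show τ - (q + (t:ℂ) * (τ₀ - q)) = τ + -(q + (t:ℂ) * (τ₀ - q)) from by ring,
                add_pow]
              rw [Finset.sum_mul, Finset.sum_mul]
              apply Finset.sum_congr rfl
              intro j hj
              ring
          _ = ∑ j ∈ Finset.range (k - 2 + 1), ∫ t in (0:ℝ)..1,
                ((k - 2).choose j : ℂ) * τ ^ j * ((-(q + (t:ℂ) * (τ₀ - q))) ^ (k - 2 - j)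
                  * f (q + (t:ℂ) * (τ₀ - q)) * (τ₀ - q)) :=
              intervalIntegral.integral_finset_sum (fun j _ => hint j)
          _ = ∑ j ∈ Finset.range (k - 2 + 1), ((k - 2).choose j : ℂ) * τ ^ j *
                segInt (fun z => (-z) ^ (k - 2 - j) * f z) q τ₀ := by
              apply Finset.sum_congr rfl
              intro j hj
              rw [segInt, intervalIntegral.integral_const_mul]
      rw [hexp, Finset.mul_sum, Polynomial.eval_finset_sum]
      apply Finset.sum_congr rfl
      intro j hj
      simp only [Polynomial.eval_mul, Polynomial.eval_pow, Polynomial.eval_C, Polynomial.eval_X]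
      ring
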